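/- Let φ : [0, τ] → ℝ³ be a C² unit-speed curve with |φ''(s)| ≤ b and τ ≤ 1/(4b). Set x = φ(0), y = φ(τ), v = φ'(0), v' = φ'(τ). Then |v - v'| ≤ 2√3 · b · |x - y|. -/

import Mathlib

/-- a `C²` unit-speed curve `φ : [0,τ] → ℝ³` with `|φ''| ≤ b` and
`τ ≤ 1/(4b)`; with `x = φ(0)`, `y = φ(τ)`, `v = φ'(0)`, `v' = φ'(τ)`:
`|v - v'| ≤ 2√3·b·|x - y|`. -/
theorem tangent_variation_le
    (b τ : ℝ) (hb : 0 < b) (hτ0 : 0 ≤ τ) (hτ : τ ≤ 1 / (4 * b))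
    (φ φ' φ'' : ℝ → EuclideanSpace ℝ (Fin 3))
    (hder1 : ∀ s ∈ Set.Icc 0 τ, HasDerivWithinAt φ (φ' s) (Set.Icc 0 τ) s)
    (hder2 : ∀ s ∈ Set.Icc 0 τ, HasDerivWithinAt φ' (φ'' s) (Set.Icc 0 τ) s)
    (hcont2 : ContinuousOn φ'' (Set.Icc 0 τ))
    (hunit : ∀ s ∈ Set.Icc 0 τ, ‖φ' s‖ = 1)
    (hbnd : ∀ s ∈ Set.Icc 0 τ, ‖φ'' s‖ ≤ b) :
    ‖φ' 0 - φ' τ‖ ≤ 2 * Real.sqrt 3 * b * ‖φ 0 - φ τ‖ := by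
  have hconv : Convex ℝ (Set.Icc (0:ℝ) τ) := convex_Icc 0 τ
  have h0 : (0:ℝ) ∈ Set.Icc (0:ℝ) τ := ⟨le_refl 0, hτ0⟩
  have hτmem : τ ∈ Set.Icc (0:ℝ) τ := ⟨hτ0, le_refl τ⟩
  -- Lipschitz bound on φ'
  have hlip : ∀ s ∈ Set.Icc (0:ℝ) τ, ‖φ' s - φ' 0‖ ≤ b * s := by
    intro s hs
    have := hconv.norm_image_sub_le_of_norm_hasDerivWithin_le hder2 hbnd h0 hs
    calc ‖φ' s - φ' 0‖ ≤ b * ‖s - 0‖ := this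
      _ = b * s := by rw [sub_zero, Real.norm_eq_abs, abs_of_nonneg hs.1]
  have hbτ : b * τ ≤ 1 / 4 := by
    have : τ * (4 * b) ≤ 1 := by
      rw [← le_div_iff₀ (by positivity)]; exact hτ
    nlinarith
  -- bound on tangent variation
  have hvar : ‖φ' 0 - φ' τ‖ ≤ b * τ := by
    rw [norm_sub_rev]
    have := hlip τ hτmem
    exact this
  -- consider ψ s = φ s - s • φ' 0
  set v := φ' 0 with hv
  have hψ : ∀ s ∈ Set.Icc (0:ℝ) τ,
      HasDerivWithinAt (fun s => φ s - s • v) (φ' s - v) (Set.Icc 0 τ) s := by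
    intro s hs
    have h1 := hder1 s hs
    have h2 : HasDerivWithinAt (fun s : ℝ => s • v) ((1:ℝ) • v) (Set.Icc 0 τ) s :=
      (hasDerivWithinAt_id s _).smul_const v
    have h3 := h1.sub h2; rw [one_smul] at h3; exact h3
  have hψbnd : ∀ s ∈ Set.Icc (0:ℝ) τ, ‖φ' s - v‖ ≤ b * τ := by
    intro s hs
    exact (hlip s hs).trans (by nlinarith [hs.2])
  have hψlip := hconv.norm_image_sub_le_of_norm_hasDerivWithin_le hψ hψbnd h0 hτmem
  -- ‖φ τ - φ 0 - τ • v‖ ≤ b τ * τ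
  have hnv : ‖v‖ = 1 := hunit 0 h0
  have key : ‖(φ τ - τ • v) - (φ 0 - (0:ℝ) • v)‖ ≤ b * τ * ‖τ - (0:ℝ)‖ := hψlip
  have hτn : ‖τ - (0:ℝ)‖ = τ := by rw [sub_zero, Real.norm_eq_abs, abs_of_nonneg hτ0]
  have key2 : ‖φ τ - φ 0 - τ • v‖ ≤ b * τ * τ := by
    calc ‖φ τ - φ 0 - τ • v‖ = ‖(φ τ - τ • v) - (φ 0 - (0:ℝ) • v)‖ := by
          rw [zero_smul, sub_zero]; congr 1; abel
      _ ≤ b * τ * ‖τ - (0:ℝ)‖ := key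
      _ = b * τ * τ := by rw [hτn]
  -- lower bound on chord
  have hchord : (3 / 4 : ℝ) * τ ≤ ‖φ 0 - φ τ‖ := by
    have h1 : ‖τ • v‖ = τ := by
      rw [norm_smul, hnv, Real.norm_eq_abs, abs_of_nonneg hτ0, mul_one]
    have h2 : ‖τ • v‖ - ‖φ τ - φ 0 - τ • v‖ ≤ ‖φ τ - φ 0‖ := by
      have h := norm_sub_norm_le (τ • v) (φ τ - φ 0)
      have he : ‖τ • v - (φ τ - φ 0)‖ = ‖φ τ - φ 0 - τ • v‖ := norm_sub_rev _ _
      linarith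
    rw [norm_sub_rev]
    have h3 : b * τ * τ ≤ (1/4) * τ := by nlinarith
    calc (3/4 : ℝ) * τ = τ - (1/4) * τ := by ring
      _ ≤ ‖τ • v‖ - ‖φ τ - φ 0 - τ • v‖ := by rw [h1]; linarith [key2]
      _ ≤ ‖φ τ - φ 0‖ := h2
  -- conclude
  have hsqrt : (1:ℝ) ≤ Real.sqrt 3 := by
    nlinarith [Real.sq_sqrt (by norm_num : (3:ℝ) ≥ 0), Real.sqrt_nonneg 3]
  have hτle : τ ≤ (4/3) * ‖φ 0 - φ τ‖ := by linarith
  calc ‖φ' 0 - φ' τ‖ ≤ b * τ := hvar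
    _ ≤ b * ((4/3) * ‖φ 0 - φ τ‖) := by
        exact mul_le_mul_of_nonneg_left hτle hb.le
    _ ≤ 2 * Real.sqrt 3 * b * ‖φ 0 - φ τ‖ := by
        nlinarith [mul_nonneg (by linarith : (0:ℝ) ≤ Real.sqrt 3 - 1)
          (mul_nonneg hb.le (norm_nonneg (φ 0 - φ τ)))]
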